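/- Let a, b ≥ 1 and let C, F ∈ ℝ[x,y] be homogeneous polynomials of degrees a and b respectively that are relatively prime (every common divisor is a unit). Then the degree-(a+b−2) homogeneous component of ℝ[x,y]/⟨C,F⟩ is one-dimensional over ℝ; in particular, there exist natural numbers u, v with u+v = a+b−2 such that the monomial x^u y^v does not belong to the ideal ⟨C,F⟩. -/

import Mathlib

open MvPolynomial

namespace SocleAux

noncomputable section

abbrev R2 : Type := MvPolynomial (Fin 2) ℝ

def V (d : ℕ) : Submodule ℝ R2 := homogeneousSubmodule (Fin 2) ℝ d

def mon (d i : ℕ) : R2 := X 0 ^ i * X 1 ^ (d - i)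

lemma mon_mem {d i : ℕ} (h : i ≤ d) : mon d i ∈ V d := by
  have := (isHomogeneous_X_pow (R := ℝ) (0 : Fin 2) i).mul
    (isHomogeneous_X_pow (R := ℝ) (1 : Fin 2) (d - i))
  rwa [show i + (d - i) = d by omega] at this

def phi (d : ℕ) : (Fin (d + 1) → ℝ) →ₗ[ℝ] R2 where
  toFun c := ∑ i : Fin (d + 1), c i • mon d i
  map_add' x y := by simp [add_smul, Finset.sum_add_distrib]
  map_smul' r x := by simp [smul_smul, Finset.smul_sum]

lemma degree_eq {m : Fin 2 →₀ ℕ} : Finsupp.degree m = m 0 + m 1 := by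
  rw [Finsupp.degree_apply, Finset.sum_subset (Finset.subset_univ m.support)]
  · exact Fin.sum_univ_two m
  · intro x _ hx
    simpa using Finsupp.notMem_support_iff.mp hx

lemma monomial_eq_smul_mon {d : ℕ} {m : Fin 2 →₀ ℕ} (hm : m 0 + m 1 = d) (c : ℝ) :
    monomial m c = c • mon d (m 0) := by
  have hm2 : m = Finsupp.single (0 : Fin 2) (m 0) + Finsupp.single (1 : Fin 2) (m 1) := by
    ext i; fin_cases i <;> simp [Finsupp.single_apply]
  have hd : d - m 0 = m 1 := by omega
  rw [mon, hd, X_pow_eq_monomial, X_pow_eq_monomial, monomial_mul, ← hm2, smul_monomial,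
    mul_one, smul_eq_mul, mul_one]

lemma phi_range (d : ℕ) : LinearMap.range (phi d) = V d := by
  apply le_antisymm
  · rintro _ ⟨c, rfl⟩
    exact Submodule.sum_mem _ fun i _ =>
      Submodule.smul_mem _ _ (mon_mem (Nat.lt_succ_iff.mp i.isLt))
  · intro p hp
    have hps : p = ∑ m ∈ p.support, monomial m (coeff m p) := p.as_sum
    rw [hps]
    apply Submodule.sum_mem
    intro m hm
    have hdeg : m 0 + m 1 = d := by
      have h1 := hp (mem_support_iff.mp hm)
      rw [show (Finsupp.weight 1 : (Fin 2 →₀ ℕ) →+ ℕ) = Finsupp.weight (fun _ => 1) from rfl,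
        ← Finsupp.degree_eq_weight_one] at h1
      rwa [degree_eq] at h1
    have hle : m 0 ≤ d := by omega
    rw [monomial_eq_smul_mon hdeg]
    refine Submodule.smul_mem _ _ ?_
    have : mon d (m 0) = phi d (Pi.single (⟨m 0, by omega⟩ : Fin (d + 1)) 1) := by
      simp only [phi, LinearMap.coe_mk, AddHom.coe_mk]
      rw [Finset.sum_eq_single (⟨m 0, by omega⟩ : Fin (d + 1))]
      · simp
      · intro b _ hb; simp [Pi.single_apply, hb]
      · simp
    rw [this]; exact LinearMap.mem_range_self _ _

lemma phi_inj (d : ℕ) : Function.Injective (phi d) := by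
  rw [injective_iff_map_eq_zero]
  intro c hc
  funext i
  have h1 : coeff (Finsupp.single (0 : Fin 2) (i : ℕ) + Finsupp.single (1 : Fin 2) (d - i)) (phi d c) = 0 := by
    rw [hc]; simp
  simp only [phi, LinearMap.coe_mk, AddHom.coe_mk, coeff_sum, coeff_smul] at h1
  have key : ∀ j : Fin (d + 1),
      coeff (Finsupp.single (0 : Fin 2) (i : ℕ) + Finsupp.single (1 : Fin 2) (d - i)) (mon d j) =
        if j = i then 1 else 0 := by
    intro j
    rw [mon, X_pow_eq_monomial, X_pow_eq_monomial, monomial_mul, mul_one, coeff_monomial]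
    by_cases hji : j = i
    · subst hji; simp
    · rw [if_neg, if_neg hji]
      intro h
      apply hji
      have := DFunLike.congr_fun h (0 : Fin 2)
      simp [Finsupp.single_apply] at this
      exact Fin.ext this
  simp only [key, smul_eq_mul, mul_ite, mul_one, mul_zero] at h1
  rw [Finset.sum_ite_eq' Finset.univ i c] at h1
  simpa using h1

lemma finrank_V (d : ℕ) : Module.finrank ℝ (V d) = d + 1 := by
  rw [← phi_range, LinearMap.finrank_range_of_inj (phi_inj d), Module.finrank_pi,
    Fintype.card_fin]

instance fd_V (d : ℕ) : FiniteDimensional ℝ (V d) := by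
  rw [← phi_range]
  exact Module.Finite.range (phi d)

/-- Homogeneous components of a multiple of `G` are multiples of `G`. -/
lemma hc_mul_mem {G : R2} {g : ℕ} (hG : G.IsHomogeneous g) (p : R2) (n : ℕ) :
    homogeneousComponent n (p * G) ∈ Ideal.span {G} := by
  have hps : p * G = ∑ k ∈ Finset.range (p.totalDegree + 1),
      homogeneousComponent k p * G := by
    rw [← Finset.sum_mul, sum_homogeneousComponent]
  rw [hps, map_sum]
  apply Ideal.sum_mem
  intro k _
  rw [homogeneousComponent_of_mem (((homogeneousComponent_isHomogeneous k p)).mul hG)]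
  split_ifs
  · exact Ideal.mul_mem_left _ _ (Ideal.subset_span rfl)
  · exact Ideal.zero_mem _

lemma homog_mult_zero {G h : R2} {g d : ℕ} (hG : G.IsHomogeneous g) (hdg : d < g)
    (hh : h ∈ Ideal.span {G}) (hhd : h.IsHomogeneous d) : h = 0 := by
  obtain ⟨t, rfl⟩ := Ideal.mem_span_singleton'.mp hh
  have h1 : t * G = homogeneousComponent d (t * G) := by
    rw [homogeneousComponent_of_mem hhd, if_pos rfl]
  have hps : t * G = ∑ k ∈ Finset.range (t.totalDegree + 1),
      homogeneousComponent k t * G := by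
    rw [← Finset.sum_mul, sum_homogeneousComponent]
  rw [h1, hps, map_sum]
  apply Finset.sum_eq_zero
  intro k _
  rw [homogeneousComponent_of_mem (((homogeneousComponent_isHomogeneous k t)).mul hG)]
  rw [if_neg (by omega)]

lemma homog_mult_factor {G h : R2} {g d : ℕ} (hG : G.IsHomogeneous g) (hgd : g ≤ d)
    (hh : h ∈ Ideal.span {G}) (hhd : h.IsHomogeneous d) :
    ∃ p : R2, p.IsHomogeneous (d - g) ∧ h = p * G := by
  obtain ⟨t, rfl⟩ := Ideal.mem_span_singleton'.mp hh
  refine ⟨homogeneousComponent (d - g) t, homogeneousComponent_isHomogeneous _ _, ?_⟩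
  have h1 : t * G = homogeneousComponent d (t * G) := by
    rw [homogeneousComponent_of_mem hhd, if_pos rfl]
  have hps : t * G = ∑ k ∈ Finset.range (t.totalDegree + 1),
      homogeneousComponent k t * G := by
    rw [← Finset.sum_mul, sum_homogeneousComponent]
  rw [h1]; conv_lhs => rw [hps]
  rw [map_sum]
  rw [Finset.sum_eq_single (d - g)]
  · rw [homogeneousComponent_of_mem
      (((homogeneousComponent_isHomogeneous (d - g) t)).mul hG), if_pos (by omega)]
  · intro k _ hk
    rw [homogeneousComponent_of_mem
      (((homogeneousComponent_isHomogeneous k t)).mul hG), if_neg (by omega)]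
  · intro hmem
    have : t.totalDegree < d - g := by
      simp only [Finset.mem_range] at hmem; omega
    rw [homogeneousComponent_eq_zero _ t this, zero_mul, map_zero]

def SM (G : R2) (d : ℕ) : Submodule ℝ R2 :=
  (Ideal.span {G}).restrictScalars ℝ ⊓ V d

lemma SM_le_V (G : R2) (d : ℕ) : SM G d ≤ V d := inf_le_right

lemma SM_eq_range {G : R2} {g d : ℕ} (hG : G.IsHomogeneous g) (hgd : g ≤ d) :
    SM G d = LinearMap.range ((LinearMap.mulRight ℝ G).comp (V (d - g)).subtype) := by
  apply le_antisymm
  · rintro h ⟨hh1, hh2⟩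
    obtain ⟨p, hp, rfl⟩ := homog_mult_factor hG hgd hh1 hh2
    exact ⟨⟨p, hp⟩, rfl⟩
  · rintro _ ⟨⟨p, hp⟩, rfl⟩
    refine ⟨Ideal.mul_mem_left _ _ (Ideal.subset_span rfl), ?_⟩
    have := (show p.IsHomogeneous (d - g) from hp).mul hG
    rwa [show d - g + g = d by omega] at this

lemma finrank_SM {G : R2} {g d : ℕ} (hG : G.IsHomogeneous g) (hG0 : G ≠ 0) (hgd : g ≤ d) :
    Module.finrank ℝ (SM G d) = d - g + 1 := by
  rw [SM_eq_range hG hgd]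
  rw [LinearMap.finrank_range_of_inj, finrank_V]
  intro x y hxy
  simp only [LinearMap.comp_apply, LinearMap.mulRight_apply, Submodule.coe_subtype] at hxy
  exact Subtype.ext (mul_left_injective₀ hG0 hxy)

lemma SM_eq_bot {G : R2} {g d : ℕ} (hG : G.IsHomogeneous g) (hdg : d < g) :
    SM G d = ⊥ := by
  rw [eq_bot_iff]
  rintro h ⟨hh1, hh2⟩
  exact homog_mult_zero hG hdg hh1 hh2

end

end SocleAux

open SocleAux

/-- If `C, F ∈ ℝ[x,y]` are relatively prime homogeneous polynomials of
degrees `a, b ≥ 1`, then the degree-`(a+b−2)` homogeneous component of `ℝ[x,y]/⟨C,F⟩`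
is one-dimensional over `ℝ`; in particular there are `u, v` with `u + v = a + b − 2`
such that the monomial `x^u y^v` is not in the ideal `⟨C,F⟩`. -/
theorem socle_of_completeIntersection (a b : ℕ) (ha : 1 ≤ a) (hb : 1 ≤ b)
    (C F : MvPolynomial (Fin 2) ℝ)
    (hCa : C.IsHomogeneous a) (hFb : F.IsHomogeneous b)
    (hrel : IsRelPrime C F) :
    Module.finrank ℝ
        (↥(homogeneousSubmodule (Fin 2) ℝ (a + b - 2)) ⧸
          Submodule.comap (homogeneousSubmodule (Fin 2) ℝ (a + b - 2)).subtype
            (Submodule.restrictScalars ℝ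
              (Ideal.span {C, F} : Ideal (MvPolynomial (Fin 2) ℝ)))) = 1 ∧
      ∃ u v : ℕ, u + v = a + b - 2 ∧
        X 0 ^ u * X 1 ^ v ∉ (Ideal.span {C, F} : Ideal (MvPolynomial (Fin 2) ℝ)) := by
  set d := a + b - 2 with hd
  rw [show homogeneousSubmodule (Fin 2) ℝ d = V d from rfl]
  -- nonzeroness
  have not_unit : ∀ (G : MvPolynomial (Fin 2) ℝ) (g : ℕ), 1 ≤ g → G.IsHomogeneous g →
      ¬ IsUnit G := by
    intro G g hg hG hu
    have h1 : (1 : R2) ∈ Ideal.span {G} :=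
      Ideal.mem_span_singleton.mpr (isUnit_iff_dvd_one.mp hu)
    have := homog_mult_zero hG (show 0 < g by omega) h1 (isHomogeneous_one (Fin 2) ℝ)
    exact one_ne_zero this
  have hC0 : C ≠ 0 := by
    rintro rfl
    exact not_unit F b hb hFb (hrel (dvd_zero F) dvd_rfl)
  have hF0 : F ≠ 0 := by
    rintro rfl
    exact not_unit C a ha hCa (hrel.symm (dvd_zero C) dvd_rfl)
  -- the ideal part in degree d
  have J_eq : (Ideal.span {C, F}).restrictScalars ℝ ⊓ V d = SM C d ⊔ SM F d := by
    apply le_antisymm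
    · rintro f ⟨hfI, hfV⟩
      obtain ⟨u, v, huv⟩ := Ideal.mem_span_pair.mp hfI
      rw [Submodule.mem_sup]
      refine ⟨homogeneousComponent d (u * C),
        ⟨hc_mul_mem hCa u d, homogeneousComponent_mem d (u * C)⟩,
        homogeneousComponent d (v * F),
        ⟨hc_mul_mem hFb v d, homogeneousComponent_mem d (v * F)⟩, ?_⟩
      rw [← map_add, huv, homogeneousComponent_of_mem hfV, if_pos rfl]
    · apply sup_le
      · exact inf_le_inf_right _ (fun x hx => Ideal.span_mono (by simp) hx)
      · exact inf_le_inf_right _ (fun x hx => Ideal.span_mono (by simp) hx)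
  have hinf : SM C d ⊓ SM F d = ⊥ := by
    rw [eq_bot_iff]
    rintro h ⟨⟨hC1, hV⟩, ⟨hF1, -⟩⟩
    have hdvd : C * F ∣ h :=
      hrel.mul_dvd (Ideal.mem_span_singleton.mp hC1) (Ideal.mem_span_singleton.mp hF1)
    have := homog_mult_zero (hCa.mul hFb) (show d < a + b by omega)
      (Ideal.mem_span_singleton.mpr hdvd) hV
    simpa using this
  haveI : FiniteDimensional ℝ (SM C d) :=
    Submodule.finiteDimensional_of_le (SM_le_V C d)
  haveI : FiniteDimensional ℝ (SM F d) :=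
    Submodule.finiteDimensional_of_le (SM_le_V F d)
  have finrank_SM_gen : ∀ (G : MvPolynomial (Fin 2) ℝ) (g : ℕ), G.IsHomogeneous g → G ≠ 0 →
      Module.finrank ℝ (SM G d) = if g ≤ d then d - g + 1 else 0 := by
    intro G g hG hG0
    split_ifs with h
    · exact finrank_SM hG hG0 h
    · rw [SM_eq_bot hG (by omega), finrank_bot]
  have hJrank : Module.finrank ℝ ↥((Ideal.span {C, F}).restrictScalars ℝ ⊓ V d) = d := by
    rw [J_eq]
    have := Submodule.finrank_sup_add_finrank_inf_eq (SM C d) (SM F d)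
    rw [hinf, finrank_bot, add_zero] at this
    rw [this, finrank_SM_gen C a hCa hC0, finrank_SM_gen F b hFb hF0]
    have hab : a ≤ d ↔ 2 ≤ b := by omega
    have hba : b ≤ d ↔ 2 ≤ a := by omega
    split_ifs <;> omega
  haveI : FiniteDimensional ℝ (V d) := fd_V d
  set W := Submodule.comap (V d).subtype
      (Submodule.restrictScalars ℝ (Ideal.span {C, F})) with hW
  have hWe : W = Submodule.comap (V d).subtype
      ((Ideal.span {C, F}).restrictScalars ℝ ⊓ V d) := by
    ext x
    simp only [hW, Submodule.mem_comap, Submodule.mem_inf]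
    exact ⟨fun h => ⟨h, x.2⟩, fun h => h.1⟩
  have hWrank : Module.finrank ℝ W = d := by
    rw [hWe, (Submodule.comapSubtypeEquivOfLe inf_le_right).finrank_eq]
    exact hJrank
  have hq := Submodule.finrank_quotient_add_finrank W
  rw [hWrank, finrank_V d] at hq
  have h1 : Module.finrank ℝ (↥(V d) ⧸ W) = 1 := by omega
  refine ⟨h1, ?_⟩
  by_contra hcon
  push_neg at hcon
  have hWtop : W = ⊤ := by
    rw [eq_top_iff]
    rintro ⟨x, hx⟩ -
    rw [← phi_range] at hx
    obtain ⟨c, rfl⟩ := hx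
    simp only [hW, Submodule.mem_comap, Submodule.coe_subtype,
      Submodule.restrictScalars_mem]
    rw [show phi d c = ∑ i : Fin (d + 1), c i • mon d i from rfl]
    refine Submodule.sum_mem ((Ideal.span {C, F}).restrictScalars ℝ) ?_
    intro i _
    refine Submodule.smul_mem _ _ ?_
    have hle := Nat.lt_succ_iff.mp i.isLt
    have := hcon (i : ℕ) (d - (i : ℕ)) (by omega)
    simpa [mon] using this
  rw [hWtop] at hWrank
  rw [finrank_top, finrank_V] at hWrank
  omega
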